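/- Let X_h(·,t) : [0,1] → ℝ² be piecewise linear in ξ on a partition 0 = ξ₀ < ξ₁ < ⋯ < ξ_M = 1 and affine in t on [t_{n-1}, t_n], with ∂_ξ X_h ≠ 0 on each subinterval. Let L(t) = Σ_{j=1}^M ∫_{ξ_{j-1}}^{ξ_j} |∂_ξ X_h(ξ,t)| dξ be the length of the polygonal curve. Then L'(t) = -Σ_{j=1}^M [τ_h]_j · v_h(ξ_j), where τ_h = ∂_ξ X_h/|∂_ξ X_h| is the (piecewise constant in ξ) unit tangent, [τ_h]_j = τ_h(ξ_j⁺,t) - τ_h(ξ_j⁻,t) is its jump at node ξ_j (with periodic identification of ξ₀ and ξ_M), and v_h(ξ) = ∂_t X_h(ξ,t) is the (time-independent) velocity. -/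

import Mathlib

open scoped RealInnerProductSpace

lemma aux_hasDerivAt_norm {F : Type*} [NormedAddCommGroup F] [InnerProductSpace ℝ F]
    {f : ℝ → F} {f' : F} {x : ℝ} (hf : HasDerivAt f f' x) (h : f x ≠ 0) :
    HasDerivAt (fun s => ‖f s‖) ⟪(‖f x‖)⁻¹ • f x, f'⟫ x := by
  have hn : ‖f x‖ ≠ 0 := norm_ne_zero_iff.mpr h
  have h1 : HasDerivAt (‖f ·‖ ^ 2) (2 * ⟪f x, f'⟫) x := hf.norm_sq
  have h2 := (Real.hasDerivAt_sqrt (by positivity : (‖f x‖ ^ 2 : ℝ) ≠ 0)).comp x h1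
  have h3 : (fun s => Real.sqrt (‖f s‖ ^ 2)) = fun s => ‖f s‖ :=
    funext fun s => Real.sqrt_sq (norm_nonneg _)
  rw [Function.comp_def] at h2
  rw [h3] at h2
  refine h2.congr_deriv ?_
  rw [Real.sqrt_sq (norm_nonneg _), real_inner_smul_left]
  field_simp


/-- For a curve that is piecewise linear in `ξ` on a partition
`0 = ξ₀ < ⋯ < ξ_M = 1` and affine in `t` on `[t_{n-1}, t_n]`, with nonvanishing slopes,
the length `L(t) = Σ_j ∫_{ξ_{j-1}}^{ξ_j} ‖∂_ξ X_h‖ dξ` of the polygonal curve satisfies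
`L'(t) = -Σ_j [τ_h]_j · v_h(ξ_j)`, where `τ_h` is the piecewise-constant unit tangent,
`[τ_h]_j` its jump at node `ξ_j` (periodic identification), and `v_h` the constant velocity. -/
theorem polygonal_length_derivative
    (M : ℕ) [NeZero M]
    (ξp : Fin (M + 1) → ℝ) (hmono : StrictMono ξp)
    (h0 : ξp 0 = 0) (h1 : ξp (Fin.last M) = 1)
    (x0 x1 : Fin (M + 1) → EuclideanSpace ℝ (Fin 2))
    (hper0 : x0 (Fin.last M) = x0 0) (hper1 : x1 (Fin.last M) = x1 0)
    (tnm1 tn : ℝ) (ht : tnm1 < tn)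
    -- nodal positions of the interpolated curve at time t
    (X : ℝ → Fin (M + 1) → EuclideanSpace ℝ (Fin 2))
    (hX : ∀ t j, X t j = ((tn - t) / (tn - tnm1)) • x0 j + ((t - tnm1) / (tn - tnm1)) • x1 j)
    -- slope ∂_ξ X_h on the j-th element, constant in ξ
    (e : ℝ → Fin M → EuclideanSpace ℝ (Fin 2))
    (he : ∀ t j, e t j = (ξp j.succ - ξp j.castSucc)⁻¹ • (X t j.succ - X t j.castSucc))
    (hne : ∀ t ∈ Set.Icc tnm1 tn, ∀ j, e t j ≠ 0)
    -- piecewise-constant unit tangent on each element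
    (τh : ℝ → Fin M → EuclideanSpace ℝ (Fin 2))
    (hτ : ∀ t j, τh t j = (‖e t j‖)⁻¹ • e t j)
    -- length of the polygonal curve
    (L : ℝ → ℝ)
    (hL : ∀ t, L t = ∑ j : Fin M, ∫ _ξ in ξp j.castSucc..ξp j.succ, ‖e t j‖)
    -- (time-independent) velocity at the nodes
    (v : Fin (M + 1) → EuclideanSpace ℝ (Fin 2))
    (hv : ∀ j, v j = (tn - tnm1)⁻¹ • (x1 j - x0 j))
    (t : ℝ) (htmem : t ∈ Set.Ioo tnm1 tn) :
    HasDerivAt L (-(∑ j : Fin M, ⟪τh t (j + 1) - τh t j, v j.succ⟫)) t := by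
  have hΔt : tn - tnm1 ≠ 0 := sub_ne_zero.mpr ht.ne'
  have htIcc : t ∈ Set.Icc tnm1 tn := ⟨htmem.1.le, htmem.2.le⟩
  -- derivative of nodal positions
  have hXd : ∀ j : Fin (M + 1), HasDerivAt (fun s => X s j) (v j) t := by
    intro j
    have h0' : HasDerivAt (fun s => ((tn - s) / (tn - tnm1)) • x0 j)
        ((-1 / (tn - tnm1)) • x0 j) t :=
      ((((hasDerivAt_id t).const_sub tn).div_const _).smul_const _)
    have h1' : HasDerivAt (fun s => ((s - tnm1) / (tn - tnm1)) • x1 j)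
        ((1 / (tn - tnm1)) • x1 j) t :=
      ((((hasDerivAt_id t).sub_const tnm1).div_const _).smul_const _)
    have h2 := h0'.add h1'
    have hfun : (fun s => X s j)
        = fun s => ((tn - s) / (tn - tnm1)) • x0 j + ((s - tnm1) / (tn - tnm1)) • x1 j :=
      funext fun s => hX s j
    rw [hfun, hv]
    refine h2.congr_deriv ?_
    rw [smul_sub, neg_div, one_div, neg_smul]
    abel
  -- positivity of element lengths
  have hξ : ∀ j : Fin M, ξp j.castSucc < ξp j.succ := fun j => hmono (Fin.castSucc_lt_succ (i := j))
  have hξne : ∀ j : Fin M, ξp j.succ - ξp j.castSucc ≠ 0 := fun j => sub_ne_zero.mpr (hξ j).ne'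
  -- derivative of the slopes
  have hed : ∀ j : Fin M, HasDerivAt (fun s => e s j)
      ((ξp j.succ - ξp j.castSucc)⁻¹ • (v j.succ - v j.castSucc)) t := by
    intro j
    have hfun : (fun s => e s j)
        = fun s => (ξp j.succ - ξp j.castSucc)⁻¹ • (X s j.succ - X s j.castSucc) :=
      funext fun s => he s j
    rw [hfun]
    exact ((hXd j.succ).fun_sub (hXd j.castSucc)).fun_const_smul _
  -- derivative of elementwise norms
  have hnd : ∀ j : Fin M, HasDerivAt (fun s => ‖e s j‖)
      ⟪τh t j, (ξp j.succ - ξp j.castSucc)⁻¹ • (v j.succ - v j.castSucc)⟫ t := by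
    intro j
    have := aux_hasDerivAt_norm (hed j) (hne t htIcc j)
    rwa [← hτ t j] at this
  -- rewrite L as a finite sum with explicit weights
  have hLfun : L = fun s => ∑ j : Fin M, (ξp j.succ - ξp j.castSucc) * ‖e s j‖ := by
    funext s
    rw [hL s]
    refine Finset.sum_congr rfl fun j _ => ?_
    rw [intervalIntegral.integral_const, smul_eq_mul]
  have hD : HasDerivAt L (∑ j : Fin M,
      (ξp j.succ - ξp j.castSucc) *
        ⟪τh t j, (ξp j.succ - ξp j.castSucc)⁻¹ • (v j.succ - v j.castSucc)⟫) t := by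
    rw [hLfun]
    exact HasDerivAt.fun_sum fun j _ => (hnd j).const_mul _
  -- simplify the derivative value
  have hterm : ∀ j : Fin M,
      (ξp j.succ - ξp j.castSucc) *
        ⟪τh t j, (ξp j.succ - ξp j.castSucc)⁻¹ • (v j.succ - v j.castSucc)⟫
      = ⟪τh t j, v j.succ⟫ - ⟪τh t j, v j.castSucc⟫ := by
    intro j
    rw [real_inner_smul_right, ← mul_assoc, mul_inv_cancel₀ (hξne j), one_mul, inner_sub_right]
  -- periodicity of v
  have hvper : v (Fin.last M) = v 0 := by rw [hv, hv, hper0, hper1]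
  -- the summation-by-parts identity
  have hshift : ∀ i : Fin M, v ((i + 1).castSucc) = v i.succ := by
    intro i
    by_cases h : (i : ℕ) + 1 < M
    · have h2 : (1 : ℕ) < M := lt_of_le_of_lt (Nat.succ_le_succ (Nat.zero_le _)) h
      have hidx : ((i + 1).castSucc : Fin (M + 1)) = i.succ := by
        apply Fin.ext
        simp only [Fin.coe_castSucc, Fin.val_succ, Fin.val_add, Fin.val_one']
        rw [Nat.mod_eq_of_lt h2, Nat.mod_eq_of_lt h]
      rw [hidx]
    · have hM : (i : ℕ) + 1 = M := Nat.le_antisymm i.isLt (not_lt.mp h)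
      have h1' : (i + 1 : Fin M) = 0 := by
        apply Fin.ext
        simp only [Fin.val_add, Fin.val_one', Fin.val_zero]
        have : ((i : ℕ) + 1 % M) % M = ((i : ℕ) + 1) % M := by
          conv_rhs => rw [Nat.add_mod]
          rw [Nat.add_mod, Nat.mod_mod]
        rw [this, hM, Nat.mod_self]
      have h2' : i.succ = Fin.last M := by
        apply Fin.ext
        simp [hM]
      rw [h1', h2', hvper]
      simp
  have hsum : ∑ j : Fin M, ⟪τh t j, v j.castSucc⟫ = ∑ j : Fin M, ⟪τh t (j + 1), v j.succ⟫ :=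
    (Fintype.sum_equiv (Equiv.addRight (1 : Fin M))
      (fun i => ⟪τh t (i + 1), v i.succ⟫) (fun j => ⟪τh t j, v j.castSucc⟫)
      (fun i => by
        simp only [Equiv.coe_addRight]
        rw [hshift i])).symm
  have hfinal : (∑ j : Fin M,
      (ξp j.succ - ξp j.castSucc) *
        ⟪τh t j, (ξp j.succ - ξp j.castSucc)⁻¹ • (v j.succ - v j.castSucc)⟫)
      = -(∑ j : Fin M, ⟪τh t (j + 1) - τh t j, v j.succ⟫) := by
    simp only [hterm, inner_sub_left]
    rw [Finset.sum_sub_distrib, Finset.sum_sub_distrib, hsum]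
    ring
  rwa [hfinal] at hD
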